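/- Let m ≥ 1 and suppose X ⊆ ℕ² is periodic modulo m with indicator f : (ℤ/mℤ)² → {0,1} (i.e. for distinct a,b ∈ ℕ, (a,b) ∈ X iff f(a mod m, b mod m) = 1). Let H be the digraph on ℤ/mℤ with edge r → s iff f(r,s) = 0. For n ≥ 1 write ℓ_r(n) = |{t ∈ [n] : t ≡ r mod m}|, and let A_H(ℓ₀,…,ℓ_{m−1}) be the number of words w₁⋯w_n over ℤ/mℤ with |{i : w_i = r}| = ℓ_r for all r and with w_i → w_{i+1} an edge of H for all i ∈ [n-1]. Then d_X(∅;n) = A_H(ℓ₀(n),…,ℓ_{m−1}(n)) · Π_{r ∈ ℤ/mℤ} ℓ_r(n)!. -/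

import Mathlib

namespace Stmt11Aux

lemma card_lists (T : Finset ℕ) :
    Nat.card {l : List ℕ // l.Nodup ∧ l.toFinset = T} = T.card.factorial := by
  classical
  set l₀ : List ℕ := T.sort (· ≤ ·) with hl₀
  have h₀nd : l₀.Nodup := T.sort_nodup _
  have h₀fs : l₀.toFinset = T := T.sort_toFinset _
  have h₀len : l₀.length = T.card := T.length_sort _
  have e : {l : List ℕ // l.Nodup ∧ l.toFinset = T} ≃ {l : List ℕ // l ∈ l₀.permutations} := by
    apply Equiv.subtypeEquivRight
    intro l
    rw [List.mem_permutations]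
    constructor
    · rintro ⟨h1, h2⟩
      exact List.perm_of_nodup_nodup_toFinset_eq h1 h₀nd (h2.trans h₀fs.symm)
    · intro h
      refine ⟨h.nodup_iff.mpr h₀nd, ?_⟩
      ext x
      rw [← h₀fs]
      simp [List.mem_toFinset, h.mem_iff]
  have hnd : l₀.permutations.Nodup := List.nodup_permutations _ h₀nd
  have e2 : {l : List ℕ // l ∈ l₀.permutations} ≃ {l : List ℕ // l ∈ l₀.permutations.toFinset} :=
    Equiv.subtypeEquivRight (by intro l; simp)
  rw [Nat.card_congr (e.trans e2), Nat.card_eq_fintype_card, Fintype.card_coe,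
    List.toFinset_card_of_nodup hnd, List.length_permutations, h₀len]

variable {β : Type*} [DecidableEq β]

/-- Interleave the lists `g r` according to the pattern `v`. -/
def merge : List β → (β → List ℕ) → List ℕ
  | [], _ => []
  | r :: v, g => (g r).headI :: merge v (Function.update g r (g r).tail)

variable (c : ℕ → β)

lemma merge_split (w : List ℕ) : ∀ g : β → List ℕ,
    (∀ r, g r = w.filter (fun t => c t == r)) → merge (w.map c) g = w := by
  induction w with
  | nil => intro g _; rfl
  | cons a w ih =>
    intro g hg
    have hga : g (c a) = a :: w.filter (fun t => c t == c a) := by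
      rw [hg (c a)]; simp [List.filter_cons]
    show (g (c a)).headI :: merge (w.map c) (Function.update g (c a) (g (c a)).tail) = a :: w
    rw [hga]
    simp only [List.headI, List.tail_cons]
    congr 1
    apply ih
    intro r
    by_cases hr : r = c a
    · subst hr; simp
    · rw [Function.update_of_ne hr, hg r, List.filter_cons]
      have : (c a == r) = false := by simpa using Ne.symm hr
      simp [this]

lemma merge_spec : ∀ (v : List β) (g : β → List ℕ),
    (∀ r, (g r).length = v.count r) → (∀ r, ∀ x ∈ g r, c x = r) →
    (merge v g).map c = v ∧ ∀ r, (merge v g).filter (fun t => c t == r) = g r := by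
  intro v
  induction v with
  | nil =>
    intro g hlen _
    refine ⟨rfl, fun r => ?_⟩
    have : (g r).length = 0 := by simpa using hlen r
    simp [merge, List.length_eq_zero_iff.mp this]
  | cons r v ih =>
    intro g hlen hres
    have hpos : 0 < (g r).length := by
      rw [hlen r, List.count_cons_self]; omega
    obtain ⟨a, t, hat⟩ : ∃ a t, g r = a :: t := by
      cases h : g r with
      | nil => rw [h] at hpos; simp at hpos
      | cons a t => exact ⟨a, t, rfl⟩
    have hca : c a = r := hres r a (by rw [hat]; exact List.mem_cons_self)
    set g' := Function.update g r (g r).tail with hg'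
    have hlen' : ∀ s, (g' s).length = v.count s := by
      intro s
      by_cases hs : s = r
      · subst hs
        have := hlen s
        rw [List.count_cons_self] at this
        simp only [hg', Function.update_self, hat, List.tail_cons]
        rw [hat] at this
        simpa using Nat.succ_injective this
      · rw [hg', Function.update_of_ne hs, hlen s, List.count_cons_of_ne (Ne.symm hs)]
    have hres' : ∀ s, ∀ x ∈ g' s, c x = s := by
      intro s x hx
      by_cases hs : s = r
      · subst hs
        exact hres s x (by rw [hg', Function.update_self] at hx; exact List.mem_of_mem_tail hx)
      · rw [hg', Function.update_of_ne hs] at hx; exact hres s x hx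
    obtain ⟨ihmap, ihfil⟩ := ih g' hlen' hres'
    have hmerge : merge (r :: v) g = a :: merge v g' := by
      show (g r).headI :: merge v (Function.update g r (g r).tail) = _
      rw [hg', hat]; rfl
    constructor
    · rw [hmerge]; simp [hca, ihmap]
    · intro s
      rw [hmerge, List.filter_cons]
      by_cases hs : s = r
      · subst hs
        have : (c a == s) = true := by simp [hca]
        simp only [hca, beq_self_eq_true, if_true, ihfil]
        rw [hg', Function.update_self, hat, List.tail_cons]
      · have : (c a == s) = false := by simp [hca]; exact Ne.symm hs
        simp only [this, if_false, Bool.false_eq_true, ihfil]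
        rw [hg', Function.update_of_ne hs]

lemma count_merge (v : List β) (g : β → List ℕ)
    (hlen : ∀ r, (g r).length = v.count r) (hres : ∀ r, ∀ x ∈ g r, c x = r) (x : ℕ) :
    (merge v g).count x = (g (c x)).count x := by
  obtain ⟨-, hfil⟩ := merge_spec c v g hlen hres
  conv_rhs => rw [← hfil (c x)]
  rw [List.count_filter (by simp)]

lemma count_map_eq_length_filter (w : List ℕ) (r : β) :
    (w.map c).count r = (w.filter (fun t => c t == r)).length := by
  rw [List.count, List.countP_map, List.countP_eq_length_filter]
  rfl

end Stmt11Aux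

open Classical in
/-- The `X`-descent set of a word `w = w₁⋯w_n` (stored 0-indexed as a list), as a subset of
`[n-1] = {1, …, n-1}`: position `i` is an `X`-descent iff `(w_i, w_{i+1}) ∈ X`. -/
noncomputable def XDes (X : Set (ℕ × ℕ)) (w : List ℕ) : Finset ℕ :=
  (Finset.Icc 1 (w.length - 1)).filter (fun i => (w.getD (i - 1) 0, w.getD i 0) ∈ X)

/-- `dX X I S` is the number of permutations of the finite label set `S ⊆ ℕ` (written in
one-line notation as duplicate-free lists using exactly the labels of `S`) whose
`X`-descent set is exactly `I`. -/
noncomputable def dX (X : Set (ℕ × ℕ)) (I : Finset ℕ) (S : Finset ℕ) : ℕ :=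
  Nat.card {w : List ℕ // w.Nodup ∧ w.toFinset = S ∧ XDes X w = I}

/-- `dXn X I n = dX X I [n]` where `[n] = {1, …, n}`. -/
noncomputable def dXn (X : Set (ℕ × ℕ)) (I : Finset ℕ) (n : ℕ) : ℕ :=
  dX X I (Finset.Icc 1 n)

/-- `residueCount m n r = ℓ_r(n)`, the number of `t ∈ [n]` with `t ≡ r (mod m)`. -/
def residueCount (m n : ℕ) (r : ZMod m) : ℕ :=
  ((Finset.Icc 1 n).filter (fun t : ℕ => ((t : ZMod m) = r))).card

/-- transfer-matrix core identity. Let `m ≥ 1` and suppose `X` is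
periodic modulo `m` with indicator `f`. Let `H` be the digraph on `ℤ/mℤ` with edge `r → s`
iff `f(r,s) = 0`. Then `d_X(∅;n)` equals `A_H(ℓ₀(n),…,ℓ_{m−1}(n))`, the number of words
`w₁⋯w_n` over `ℤ/mℤ` with content `ℓ_r(n)` for each residue `r` whose consecutive
transitions are all edges of `H` (i.e. `f(w_i, w_{i+1}) = 0` for all `i ∈ [n-1]`),
multiplied by `Π_r ℓ_r(n)!`. -/
theorem stmt11 (m : ℕ) [NeZero m] (X : Set (ℕ × ℕ)) (f : ZMod m → ZMod m → Bool)
    (hX : ∀ a b : ℕ, a ≠ b → ((a, b) ∈ X ↔ f (a : ZMod m) (b : ZMod m) = true))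
    (n : ℕ) (hn : 1 ≤ n) :
    dXn X ∅ n =
      Nat.card {w : List (ZMod m) // w.length = n ∧
          (∀ r : ZMod m, w.count r = residueCount m n r) ∧
          (∀ i ∈ Finset.Icc 1 (n - 1), f (w.getD (i - 1) 0) (w.getD i 0) = false)} *
        ∏ r : ZMod m, (residueCount m n r).factorial := by
  have hScard : (Finset.Icc 1 n).card = n := by simp
  have hres : ∀ r : ZMod m,
      ((Finset.Icc 1 n).filter (fun t : ℕ => ((t : ZMod m) = r))).card = residueCount m n r :=
    fun _ => rfl
  have hTsplit : ∀ (w : List ℕ), w.toFinset = Finset.Icc 1 n → ∀ r : ZMod m,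
      (w.filter (fun t : ℕ => ((t : ZMod m) == r))).toFinset
        = (Finset.Icc 1 n).filter (fun t : ℕ => ((t : ZMod m) = r)) := by
    intro w hw r
    ext x
    simp only [List.mem_toFinset, List.mem_filter, Finset.mem_filter, beq_iff_eq, ← hw,
      List.mem_toFinset]
  have hlenw : ∀ w : List ℕ, w.Nodup → w.toFinset = Finset.Icc 1 n → w.length = n := by
    intro w hnd hfs
    rw [← List.toFinset_card_of_nodup hnd, hfs, hScard]
  have hcount : ∀ w : List ℕ, w.Nodup → w.toFinset = Finset.Icc 1 n → ∀ r : ZMod m,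
      (w.map (fun t : ℕ => (t : ZMod m))).count r = residueCount m n r := by
    intro w hnd hfs r
    rw [Stmt11Aux.count_map_eq_length_filter,
      ← List.toFinset_card_of_nodup (hnd.filter _), hTsplit w hfs r, hres]
  have hdes_iff : ∀ w : List ℕ, w.Nodup → w.length = n →
      (XDes X w = ∅ ↔ ∀ i ∈ Finset.Icc 1 (n - 1),
        f ((w.map (fun t : ℕ => (t : ZMod m))).getD (i - 1) 0)
          ((w.map (fun t : ℕ => (t : ZMod m))).getD i 0) = false) := by
    intro w hnd hlen
    classical
    rw [XDes, Finset.filter_eq_empty_iff, hlen]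
    refine forall_congr' fun i => imp_congr_right fun hi => ?_
    simp only [Finset.mem_Icc] at hi
    have hw2 : i < w.length := by rw [hlen]; omega
    have hw1 : i - 1 < w.length := by rw [hlen]; omega
    have hm2 : i < (w.map (fun t : ℕ => (t : ZMod m))).length := by simpa using hw2
    have hm1 : i - 1 < (w.map (fun t : ℕ => (t : ZMod m))).length := by simpa using hw1
    rw [List.getD_eq_getElem _ _ hm1, List.getD_eq_getElem _ _ hm2,
      List.getD_eq_getElem _ _ hw1, List.getD_eq_getElem _ _ hw2,
      List.getElem_map, List.getElem_map]
    have hne : w[i - 1]'hw1 ≠ w[i]'hw2 := by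
      intro h
      have := (List.Nodup.getElem_inj_iff hnd).mp h
      omega
    rw [hX _ _ hne]
    simp [Bool.not_eq_true]
  have key : ∀ (v : List (ZMod m)), v.length = n →
      (∀ r : ZMod m, v.count r = residueCount m n r) →
      ∀ g : (∀ r : ZMod m, {l : List ℕ // l.Nodup ∧
        l.toFinset = (Finset.Icc 1 n).filter (fun t : ℕ => ((t : ZMod m) = r))}),
      (Stmt11Aux.merge v (fun r => (g r).1)).Nodup ∧
      (Stmt11Aux.merge v (fun r => (g r).1)).toFinset = Finset.Icc 1 n ∧
      (Stmt11Aux.merge v (fun r => (g r).1)).length = n ∧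
      (Stmt11Aux.merge v (fun r => (g r).1)).map (fun t : ℕ => (t : ZMod m)) = v ∧
      ∀ r : ZMod m, (Stmt11Aux.merge v (fun r => (g r).1)).filter
        (fun t : ℕ => ((t : ZMod m) == r)) = (g r).1 := by
    intro v hvlen hvcount g
    have hgres : ∀ r : ZMod m, ∀ x ∈ (g r).1, ((x : ZMod m) = r) := by
      intro r x hx
      have hx' := List.mem_toFinset.mpr hx
      rw [(g r).2.2] at hx'
      exact (Finset.mem_filter.mp hx').2
    have hglen : ∀ r : ZMod m, ((g r).1).length = v.count r := by
      intro r
      have h := List.toFinset_card_of_nodup (g r).2.1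
      rw [(g r).2.2] at h
      rw [hvcount r, ← hres r, h]
    obtain ⟨hmap, hfil⟩ :=
      Stmt11Aux.merge_spec (fun t : ℕ => (t : ZMod m)) v (fun r => (g r).1) hglen hgres
    have hcnt :=
      Stmt11Aux.count_merge (fun t : ℕ => (t : ZMod m)) v (fun r => (g r).1) hglen hgres
    have hnd : (Stmt11Aux.merge v (fun r => (g r).1)).Nodup := by
      rw [List.nodup_iff_count_le_one]
      intro x
      rw [hcnt x]
      exact List.nodup_iff_count_le_one.mp (g _).2.1 x
    have hlenm : (Stmt11Aux.merge v (fun r => (g r).1)).length = n := by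
      have := congrArg List.length hmap
      simpa [hvlen] using this
    refine ⟨hnd, ?_, hlenm, hmap, hfil⟩
    ext x
    rw [List.mem_toFinset]
    have hmem : x ∈ Stmt11Aux.merge v (fun r => (g r).1) ↔ x ∈ (g ((x : ZMod m))).1 := by
      rw [← List.count_pos_iff, ← List.count_pos_iff, hcnt x]
    rw [hmem, ← List.mem_toFinset, (g _).2.2, Finset.mem_filter]
    simp
  refine Eq.trans (b := Nat.card ({w : List (ZMod m) // w.length = n ∧
          (∀ r : ZMod m, w.count r = residueCount m n r) ∧
          (∀ i ∈ Finset.Icc 1 (n - 1), f (w.getD (i - 1) 0) (w.getD i 0) = false)} ×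
      (∀ r : ZMod m, {l : List ℕ // l.Nodup ∧
        l.toFinset = (Finset.Icc 1 n).filter (fun t : ℕ => ((t : ZMod m) = r))}))) ?_ ?_
  · rw [dXn, dX]
    refine Nat.card_congr
      { toFun := fun w =>
          (⟨w.1.map (fun t : ℕ => (t : ZMod m)),
            by simp [hlenw w.1 w.2.1 w.2.2.1],
            fun r => hcount w.1 w.2.1 w.2.2.1 r,
            (hdes_iff w.1 w.2.1 (hlenw w.1 w.2.1 w.2.2.1)).mp w.2.2.2⟩,
          fun r => ⟨w.1.filter (fun t : ℕ => ((t : ZMod m) == r)),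
            w.2.1.filter _, hTsplit w.1 w.2.2.1 r⟩)
        invFun := fun p =>
          ⟨Stmt11Aux.merge p.1.1 (fun r => (p.2 r).1),
            (key p.1.1 p.1.2.1 p.1.2.2.1 p.2).1,
            (key p.1.1 p.1.2.1 p.1.2.2.1 p.2).2.1,
            (hdes_iff _ (key p.1.1 p.1.2.1 p.1.2.2.1 p.2).1
              (key p.1.1 p.1.2.1 p.1.2.2.1 p.2).2.2.1).mpr
              (by rw [(key p.1.1 p.1.2.1 p.1.2.2.1 p.2).2.2.2.1]; exact p.1.2.2.2)⟩
        left_inv := fun w =>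
          Subtype.ext (Stmt11Aux.merge_split (fun t : ℕ => (t : ZMod m)) w.1 _ (fun r => rfl))
        right_inv := fun p =>
          Prod.ext (Subtype.ext (key p.1.1 p.1.2.1 p.1.2.2.1 p.2).2.2.2.1)
            (funext fun r =>
              Subtype.ext ((key p.1.1 p.1.2.1 p.1.2.2.1 p.2).2.2.2.2 r)) }
  · rw [Nat.card_prod, Nat.card_pi]
    congr 1
    exact Finset.prod_congr rfl fun r _ => by rw [Stmt11Aux.card_lists, hres]
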